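/- Let A be an m×d matrix with ‖A‖_op = 1 and δ_{2s} < 1/(2+2η)² for some η ∈ [0,1]. Let x* ∈ ℝ^d, y = Ax* + e, ẽ = y − A H_s(x*), and let (x^t) be the ILAT iterates: a^t = x^{t-1} + A*(y − Ax^{t-1}) and x^t the s-sparse coordinate projection of a^t closest to a^t − η∇C(a^t). Then ‖H_s(x*) − x^t‖₂ ≤ ρ‖H_s(x*) − x^{t-1}‖₂ + (2+8η)‖ẽ‖₂, where ρ = (2+2η)√δ_{2s} < 1. -/

import Mathlib

open Matrix MeasureTheory ProbabilityTheory Filter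
open scoped RealInnerProductSpace NNReal

/-- Operator norm of a matrix with respect to Euclidean norms. -/
noncomputable def opNorm {m d : ℕ} (A : Matrix (Fin m) (Fin d) ℝ) : ℝ :=
  ‖LinearMap.toContinuousLinearMap (Matrix.toEuclideanLin A)‖

/-- Matrix-vector multiplication as a map between Euclidean spaces. -/
noncomputable def Mv {m d : ℕ} (A : Matrix (Fin m) (Fin d) ℝ)
    (x : EuclideanSpace ℝ (Fin d)) : EuclideanSpace ℝ (Fin m) :=
  Matrix.toEuclideanLin A x

/-- A vector is `s`-sparse if it has at most `s` nonzero entries. -/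
def Sparse {d : ℕ} (s : ℕ) (x : EuclideanSpace ℝ (Fin d)) : Prop :=
  Set.ncard {i | x i ≠ 0} ≤ s

/-- Coordinate projection onto the index set `S`. -/
noncomputable def proj {d : ℕ} (S : Finset (Fin d)) (z : EuclideanSpace ℝ (Fin d)) :
    EuclideanSpace ℝ (Fin d) :=
  WithLp.toLp 2 (fun i => if i ∈ S then z i else 0)

section Aux
variable {m d : ℕ}

lemma mv_adj (A : Matrix (Fin m) (Fin d) ℝ) (u : EuclideanSpace ℝ (Fin m))
    (v : EuclideanSpace ℝ (Fin d)) : ⟪Mv Aᵀ u, v⟫ = ⟪u, Mv A v⟫ := by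
  have h1 : Aᵀ = Aᴴ := (Matrix.conjTranspose_eq_transpose_of_trivial A).symm
  show ⟪Matrix.toEuclideanLin Aᵀ u, v⟫ = ⟪u, Matrix.toEuclideanLin A v⟫
  rw [h1, Matrix.toEuclideanLin_conjTranspose_eq_adjoint]
  exact LinearMap.adjoint_inner_left _ v u

lemma mv_A_norm {A : Matrix (Fin m) (Fin d) ℝ} (hA : opNorm A = 1)
    (v : EuclideanSpace ℝ (Fin d)) : ‖Mv A v‖ ≤ ‖v‖ := by
  have h := (LinearMap.toContinuousLinearMap (Matrix.toEuclideanLin A)).le_opNorm v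
  rw [show ‖LinearMap.toContinuousLinearMap (Matrix.toEuclideanLin A)‖ = 1 from hA] at h
  simpa [Mv] using h

lemma mv_At_norm {A : Matrix (Fin m) (Fin d) ℝ} (hA : opNorm A = 1)
    (u : EuclideanSpace ℝ (Fin m)) : ‖Mv Aᵀ u‖ ≤ ‖u‖ := by
  have h1 : ⟪Mv Aᵀ u, Mv Aᵀ u⟫ = ⟪u, Mv A (Mv Aᵀ u)⟫ := mv_adj A u (Mv Aᵀ u)
  have h2 : ⟪u, Mv A (Mv Aᵀ u)⟫ ≤ ‖u‖ * ‖Mv A (Mv Aᵀ u)‖ := real_inner_le_norm _ _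
  have h3 : ‖Mv A (Mv Aᵀ u)‖ ≤ ‖Mv Aᵀ u‖ := mv_A_norm hA _
  have h4 : ⟪Mv Aᵀ u, Mv Aᵀ u⟫ = ‖Mv Aᵀ u‖ ^ 2 := real_inner_self_eq_norm_sq _
  nlinarith [norm_nonneg (Mv Aᵀ u), norm_nonneg u, norm_nonneg (Mv A (Mv Aᵀ u))]

/-- shift P across the inner product -/
lemma mv_shift (A : Matrix (Fin m) (Fin d) ℝ) (v v' : EuclideanSpace ℝ (Fin d)) :
    ⟪v, Mv Aᵀ (Mv A v')⟫ = ⟪Mv Aᵀ (Mv A v), v'⟫ := by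
  rw [real_inner_comm, mv_adj, mv_adj, real_inner_comm]

lemma sq_to_norm {x c : ℝ} (hx : 0 ≤ x) (hc : 0 ≤ c) (hh : x ^ 2 ≤ c ^ 2) : x ≤ c := by
  nlinarith

lemma enorm_mono (u v : EuclideanSpace ℝ (Fin d)) (hc : ∀ i, |u i| ≤ |v i|) : ‖u‖ ≤ ‖v‖ := by
  rw [EuclideanSpace.norm_eq, EuclideanSpace.norm_eq]
  apply Real.sqrt_le_sqrt
  apply Finset.sum_le_sum
  intro i _
  rw [Real.norm_eq_abs, Real.norm_eq_abs]
  exact pow_le_pow_left₀ (abs_nonneg _) (hc i) 2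

end Aux

section Quad
variable {m d : ℕ}

/-- ‖(I - AᵀA)v‖² ≤ ‖v‖² - ‖Av‖². -/
lemma q_norm_sq {A : Matrix (Fin m) (Fin d) ℝ} (hA : opNorm A = 1)
    (v : EuclideanSpace ℝ (Fin d)) :
    ‖v - Mv Aᵀ (Mv A v)‖ ^ 2 ≤ ‖v‖ ^ 2 - ‖Mv A v‖ ^ 2 := by
  set p1 := Mv Aᵀ (Mv A v) with hp1
  have e0 : ‖v - p1‖ ^ 2 = ⟪v - p1, v - p1⟫ := (real_inner_self_eq_norm_sq _).symm
  have e1 : ⟪p1, v⟫ = ‖Mv A v‖ ^ 2 := by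
    rw [hp1, mv_adj, real_inner_self_eq_norm_sq]
  have e2 : ⟪v, p1⟫ = ‖Mv A v‖ ^ 2 := by rw [real_inner_comm]; exact e1
  have e3 : ⟪p1, p1⟫ = ‖p1‖ ^ 2 := real_inner_self_eq_norm_sq _
  have e4 : ‖p1‖ ≤ ‖Mv A v‖ := mv_At_norm hA _
  have e5 : ⟪v, v⟫ = ‖v‖ ^ 2 := real_inner_self_eq_norm_sq _
  rw [e0, inner_sub_left, inner_sub_right, inner_sub_right, e1, e2, e3, e5]
  nlinarith [norm_nonneg p1, norm_nonneg (Mv A v)]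

/-- 4‖PQv‖² ≤ ⟪Qv, v⟫ where P = AᵀA, Q = I - P. -/
lemma pq_bound {A : Matrix (Fin m) (Fin d) ℝ} (hA : opNorm A = 1)
    (w : EuclideanSpace ℝ (Fin d)) :
    4 * ‖Mv Aᵀ (Mv A (w - Mv Aᵀ (Mv A w)))‖ ^ 2 ≤ ⟪w - Mv Aᵀ (Mv A w), w⟫ := by
  set p1 := Mv Aᵀ (Mv A w) with hp1
  set p2 := Mv Aᵀ (Mv A p1) with hp2
  set p3 := Mv Aᵀ (Mv A p2) with hp3
  set p4 := Mv Aᵀ (Mv A p3) with hp4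
  set c0 := ⟪w, w⟫ with hc0
  set c1 := ⟪p1, w⟫ with hc1
  set c2 := ⟪p2, w⟫ with hc2
  set c3 := ⟪p3, w⟫ with hc3
  set c4 := ⟪p4, w⟫ with hc4
  -- cross inner products
  have f1w : ⟪w, p1⟫ = c1 := by rw [real_inner_comm]
  have f11 : ⟪p1, p1⟫ = c2 := by rw [hp1, mv_shift, ← hp2]
  have f21 : ⟪p2, p1⟫ = c3 := by rw [hp1, mv_shift, ← hp3]
  have f12 : ⟪p1, p2⟫ = c3 := by rw [real_inner_comm]; exact f21
  have f22 : ⟪p2, p2⟫ = c4 := by rw [hp2, mv_shift, ← hp3, hp1, mv_shift, ← hp4]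
  have f2w : ⟪p2, w⟫ = c2 := rfl
  -- P is linear
  have hPlin : ∀ u u' : EuclideanSpace ℝ (Fin d),
      Mv Aᵀ (Mv A (u - u')) = Mv Aᵀ (Mv A u) - Mv Aᵀ (Mv A u') := by
    intro u u'; show Matrix.toEuclideanLin Aᵀ (Matrix.toEuclideanLin A (u - u')) = _
    rw [map_sub, map_sub]; rfl
  have hPsmul : ∀ (r : ℝ) (u : EuclideanSpace ℝ (Fin d)),
      Mv Aᵀ (Mv A (r • u)) = r • Mv Aᵀ (Mv A u) := by
    intro r u; show Matrix.toEuclideanLin Aᵀ (Matrix.toEuclideanLin A (r • u)) = _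
    rw [_root_.map_smul, _root_.map_smul]; rfl
  have hPq : Mv Aᵀ (Mv A (w - p1)) = p1 - p2 := by rw [hPlin, ← hp1, ← hp2]
  -- quantities
  have A1 : ⟪w - p1, w⟫ = c0 - c1 := by rw [inner_sub_left]
  have A2 : ‖w - p1‖ ^ 2 = c0 - 2 * c1 + c2 := by
    rw [← real_inner_self_eq_norm_sq, inner_sub_left, inner_sub_right, inner_sub_right,
      f1w, f11]
    ring
  have A4 : ‖p1 - p2‖ ^ 2 = c2 - 2 * c3 + c4 := by
    rw [← real_inner_self_eq_norm_sq, inner_sub_left, inner_sub_right, inner_sub_right,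
      f11, f12, f21, f22]
    ring
  -- u = 2 p1 - w
  set u := (2 : ℝ) • p1 - w with hu
  have hPu : Mv Aᵀ (Mv A u) = (2 : ℝ) • p2 - p1 := by
    rw [hu, hPlin, hPsmul, ← hp1, ← hp2]
  have A5 : ⟪Mv A u, Mv A u⟫ = 4 * c3 - 4 * c2 + c1 := by
    have : ⟪Mv Aᵀ (Mv A u), u⟫ = ⟪Mv A u, Mv A u⟫ := mv_adj A (Mv A u) u
    rw [← this, hPu, hu, inner_sub_left, inner_sub_right, inner_sub_right,
      inner_smul_left, inner_smul_left, inner_smul_right, inner_smul_right]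
    simp only [RCLike.conj_to_real, conj_trivial]
    rw [f21, f11]
    push_cast
    ring
  have A6 : ⟪Mv Aᵀ (Mv A u), Mv Aᵀ (Mv A u)⟫ = 4 * c4 - 4 * c3 + c2 := by
    rw [hPu, inner_sub_left, inner_sub_right, inner_sub_right,
      inner_smul_left, inner_smul_left, inner_smul_right, inner_smul_right]
    simp only [conj_trivial]
    rw [f22, f21, f12, f11]
    push_cast
    ring
  have A7 : ⟪Mv Aᵀ (Mv A u), Mv Aᵀ (Mv A u)⟫ ≤ ⟪Mv A u, Mv A u⟫ := by
    rw [real_inner_self_eq_norm_sq, real_inner_self_eq_norm_sq]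
    have := mv_At_norm hA (Mv A u)
    nlinarith [norm_nonneg (Mv Aᵀ (Mv A u)), norm_nonneg (Mv A u)]
  have A8 : (0 : ℝ) ≤ ‖w - p1‖ ^ 2 := sq_nonneg _
  rw [hPq, A1, A4]
  rw [A2] at A8
  rw [A5, A6] at A7
  linarith
end Quad

section SparseLemmas
variable {d : ℕ}

lemma sparse_sub {s1 s2 : ℕ} {u v : EuclideanSpace ℝ (Fin d)}
    (hu : Sparse s1 u) (hv : Sparse s2 v) : Sparse (s1 + s2) (u - v) := by
  have hsub : {i | (u - v) i ≠ 0} ⊆ {i | u i ≠ 0} ∪ {i | v i ≠ 0} := by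
    intro i hi
    by_contra hcon
    simp only [Set.mem_union, Set.mem_setOf_eq, not_or, not_not] at hcon
    apply hi
    show u i - v i = 0
    rw [hcon.1, hcon.2, sub_zero]
  calc Set.ncard {i | (u - v) i ≠ 0}
      ≤ Set.ncard ({i | u i ≠ 0} ∪ {i | v i ≠ 0}) :=
        Set.ncard_le_ncard hsub (Set.toFinite _)
    _ ≤ Set.ncard {i | u i ≠ 0} + Set.ncard {i | v i ≠ 0} := Set.ncard_union_le _ _
    _ ≤ s1 + s2 := Nat.add_le_add hu hv

lemma sparse_proj (S : Finset (Fin d)) (z : EuclideanSpace ℝ (Fin d)) :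
    Sparse S.card (proj S z) := by
  have hsub : {i | proj S z i ≠ 0} ⊆ (S : Set (Fin d)) := by
    intro i hi
    by_contra hcon
    apply hi
    exact (if_neg (by simpa using hcon) : (if i ∈ S then z i else 0) = 0)
  calc Set.ncard {i | proj S z i ≠ 0} ≤ Set.ncard (S : Set (Fin d)) :=
        Set.ncard_le_ncard hsub (Set.toFinite _)
    _ = S.card := Set.ncard_coe_finset S

/-- projection error bound: if supp h ⊆ S then ‖proj S z - z‖ ≤ ‖h - z‖ -/
lemma proj_err (S : Finset (Fin d)) (z h : EuclideanSpace ℝ (Fin d))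
    (hS : ∀ i, i ∉ S → h i = 0) : ‖proj S z - z‖ ≤ ‖h - z‖ := by
  apply enorm_mono
  intro i
  show |proj S z i - z i| ≤ |h i - z i|
  by_cases hi : i ∈ S
  · have : proj S z i = z i := (if_pos hi : (if i ∈ S then z i else 0) = z i)
    rw [this, sub_self, abs_zero]
    exact abs_nonneg _
  · have h1 : proj S z i = 0 := (if_neg hi : (if i ∈ S then z i else 0) = 0)
    rw [h1, hS i hi]

set_option maxHeartbeats 1000000 in
theorem stmt10 {m d s : ℕ} (A : Matrix (Fin m) (Fin d) ℝ) (hA : opNorm A = 1)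
    (η : ℝ) (hη0 : 0 ≤ η) (hη1 : η ≤ 1)
    (δ : ℝ) (hδ0 : 0 ≤ δ)
    (hRIP : ∀ v : EuclideanSpace ℝ (Fin d), Sparse (2 * s) v →
      (1 - δ) * ‖v‖ ^ 2 ≤ ‖Mv A v‖ ^ 2 ∧ ‖Mv A v‖ ^ 2 ≤ (1 + δ) * ‖v‖ ^ 2)
    (hδ : δ < 1 / (2 + 2 * η) ^ 2)
    (xs : EuclideanSpace ℝ (Fin d)) (e : EuclideanSpace ℝ (Fin m))
    (y : EuclideanSpace ℝ (Fin m)) (hy : y = Mv A xs + e)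
    (h : EuclideanSpace ℝ (Fin d)) (hh : Sparse s h)
    (hbest : ∀ w : EuclideanSpace ℝ (Fin d), Sparse s w → ‖xs - h‖ ≤ ‖xs - w‖)
    (et : EuclideanSpace ℝ (Fin m)) (het : et = y - Mv A h)
    (x a : ℕ → EuclideanSpace ℝ (Fin d)) (hx0 : x 0 = 0)
    (ha : ∀ t : ℕ, a (t + 1) = x t + Mv Aᵀ (y - Mv A (x t)))
    (hstep : ∀ t : ℕ, ∃ Ω : Finset (Fin d), Ω.card = s ∧ x (t + 1) = proj Ω (a (t + 1)) ∧
      ∀ Ω' : Finset (Fin d), Ω'.card = s →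
        ‖x (t + 1) - (a (t + 1) - η • ((-2 : ℝ) • Mv Aᵀ (y - Mv A (a (t + 1)))))‖ ≤
        ‖proj Ω' (a (t + 1)) - (a (t + 1) - η • ((-2 : ℝ) • Mv Aᵀ (y - Mv A (a (t + 1)))))‖) :
    (2 + 2 * η) * Real.sqrt δ < 1 ∧
    ∀ t : ℕ, ‖h - x (t + 1)‖ ≤
      (2 + 2 * η) * Real.sqrt δ * ‖h - x t‖ + (2 + 8 * η) * ‖et‖ := by
  classical
  obtain ⟨Ω0, hΩ0card, -, -⟩ := hstep 0
  have hsd : s ≤ d := by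
    rw [← hΩ0card]
    simpa using Finset.card_le_univ Ω0
  have hfin : {i | h i ≠ 0}.Finite := Set.toFinite _
  have hT0card : hfin.toFinset.card ≤ s := by
    rw [← Set.ncard_eq_toFinset_card _ hfin]; exact hh
  obtain ⟨Ωstar, hsubstar, hΩstarcard⟩ :=
    Finset.exists_superset_card_eq hT0card (by simpa using hsd)
  have hmemh : ∀ i, i ∉ Ωstar → h i = 0 := by
    intro i hi
    by_contra hne
    exact hi (hsubstar (hfin.mem_toFinset.2 hne))
  have h2η : (0:ℝ) < 2 + 2*η := by linarith
  have hδ' : δ < (1 / (2 + 2*η))^2 := by rw [div_pow, one_pow]; exact hδ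
  have hsqrt : Real.sqrt δ < 1 / (2 + 2*η) := by
    have h1 := Real.sqrt_lt_sqrt hδ0 hδ'
    rwa [Real.sqrt_sq (by positivity)] at h1
  have part1 : (2 + 2*η) * Real.sqrt δ < 1 := by
    have h2 := (mul_lt_mul_iff_right₀ h2η).2 hsqrt
    rwa [mul_one_div, div_self (ne_of_gt h2η)] at h2
  refine ⟨part1, ?_⟩
  have hxs : ∀ t, Sparse s (x t) := by
    intro t
    cases t with
    | zero =>
      rw [hx0]
      show Set.ncard {i | (0 : EuclideanSpace ℝ (Fin d)) i ≠ 0} ≤ s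
      have he : {i | (0 : EuclideanSpace ℝ (Fin d)) i ≠ 0} = ∅ := by
        ext i; simp
      rw [he]; simp
    | succ t =>
      obtain ⟨Ω, hc, hxe, -⟩ := hstep t
      rw [hxe, ← hc]
      exact sparse_proj Ω _
  intro t
  obtain ⟨Ω, hΩcard, hxe, hopt⟩ := hstep t
  have hb := hopt Ωstar hΩstarcard
  set w := x t - h with hwdef
  have hw2s : Sparse (2*s) w := by
    rw [two_mul]; exact sparse_sub (hxs t) hh
  have hRw := (hRIP w hw2s).1
  set a' := a (t+1) with ha'def
  set q := w - Mv Aᵀ (Mv A w) with hqdef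
  -- linearity helpers
  have hgadd : ∀ u v : EuclideanSpace ℝ (Fin m), Mv Aᵀ (u + v) = Mv Aᵀ u + Mv Aᵀ v := by
    intro u v; show Matrix.toEuclideanLin Aᵀ (u + v) = _; rw [map_add]; rfl
  have hgsub : ∀ u v : EuclideanSpace ℝ (Fin m), Mv Aᵀ (u - v) = Mv Aᵀ u - Mv Aᵀ v := by
    intro u v; show Matrix.toEuclideanLin Aᵀ (u - v) = _; rw [map_sub]; rfl
  have hfsub : ∀ u v : EuclideanSpace ℝ (Fin d), Mv A (u - v) = Mv A u - Mv A v := by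
    intro u v; show Matrix.toEuclideanLin A (u - v) = _; rw [map_sub]; rfl
  have hfadd : ∀ u v : EuclideanSpace ℝ (Fin d), Mv A (u + v) = Mv A u + Mv A v := by
    intro u v; show Matrix.toEuclideanLin A (u + v) = _; rw [map_add]; rfl
  have hyw : y - Mv A (x t) = et + Mv A (h - x t) := by
    rw [het, hfsub]; abel
  have key1 : a' - h = q + Mv Aᵀ et := by
    rw [ha'def, ha t, hyw, hgadd, hqdef, hwdef]
    have h1 : Mv Aᵀ (Mv A (h - x t)) = -Mv Aᵀ (Mv A (x t - h)) := by
      rw [show h - x t = -(x t - h) by abel]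
      show Matrix.toEuclideanLin Aᵀ (Matrix.toEuclideanLin A (-(x t - h))) = _
      rw [map_neg, map_neg]; rfl
    rw [h1]; abel
  have hya' : y - Mv A a' = et - Mv A (a' - h) := by
    rw [het, hfsub]; abel
  have key2 : Mv Aᵀ (y - Mv A a') =
      (Mv Aᵀ et - Mv Aᵀ (Mv A (Mv Aᵀ et))) - Mv Aᵀ (Mv A q) := by
    rw [hya', key1, hfadd, hgsub, hgadd]; abel
  -- norm bounds
  have hQw : ‖q‖ ≤ Real.sqrt δ * ‖w‖ := by
    have h1 := q_norm_sq hA w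
    apply sq_to_norm (norm_nonneg _) (by positivity)
    have h2 : (Real.sqrt δ * ‖w‖)^2 = δ * ‖w‖^2 := by
      rw [mul_pow, Real.sq_sqrt hδ0]
    rw [h2, ← hqdef] at *
    nlinarith [hRw]
  have hPQw : ‖Mv Aᵀ (Mv A q)‖ ≤ Real.sqrt δ / 2 * ‖w‖ := by
    have h1 := pq_bound hA w
    rw [← hqdef] at h1
    have h2 : ⟪q, w⟫ = ‖w‖^2 - ‖Mv A w‖^2 := by
      rw [hqdef, inner_sub_left, real_inner_self_eq_norm_sq, mv_adj,
        real_inner_self_eq_norm_sq]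
    apply sq_to_norm (norm_nonneg _) (by positivity)
    have h3 : (Real.sqrt δ / 2 * ‖w‖)^2 = δ/4 * ‖w‖^2 := by
      rw [mul_pow, div_pow, Real.sq_sqrt hδ0]; ring
    rw [h3]; nlinarith
  have hget : ‖Mv Aᵀ et‖ ≤ ‖et‖ := mv_At_norm hA et
  have hQget : ‖Mv Aᵀ et - Mv Aᵀ (Mv A (Mv Aᵀ et))‖ ≤ ‖et‖ := by
    have h1 := q_norm_sq hA (Mv Aᵀ et)
    apply sq_to_norm (norm_nonneg _) (norm_nonneg _)
    nlinarith [norm_nonneg (Mv A (Mv Aᵀ et)), norm_nonneg (Mv Aᵀ et), norm_nonneg et]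
  have nA : ‖a' - h‖ ≤ Real.sqrt δ * ‖w‖ + ‖et‖ := by
    rw [key1]
    exact le_trans (norm_add_le _ _) (add_le_add hQw hget)
  have nC : ‖Mv Aᵀ (y - Mv A a')‖ ≤ Real.sqrt δ / 2 * ‖w‖ + ‖et‖ := by
    rw [key2]
    have := norm_sub_le (Mv Aᵀ et - Mv Aᵀ (Mv A (Mv Aᵀ et))) (Mv Aᵀ (Mv A q))
    have h4 := add_le_add hQget hPQw
    linarith
  set v2 := Mv Aᵀ (y - Mv A a') with hv2def
  have hdiff : ‖a' - (a' - η • ((-2:ℝ) • v2))‖ = 2*η*‖v2‖ := by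
    rw [sub_sub_cancel, smul_smul, norm_smul, Real.norm_eq_abs,
      abs_of_nonpos (by linarith)]
    ring
  have tri1 : ‖h - x (t+1)‖ ≤ ‖h - a'‖ + ‖a' - x (t+1)‖ := by
    have e1 : h - x (t+1) = (h - a') + (a' - x (t+1)) := by abel
    rw [e1]; exact norm_add_le _ _
  have tri2 : ‖a' - x (t+1)‖ ≤ ‖a' - (a' - η • ((-2:ℝ) • v2))‖ +
      ‖x (t+1) - (a' - η • ((-2:ℝ) • v2))‖ := by
    have e1 : a' - x (t+1) = (a' - (a' - η • ((-2:ℝ) • v2))) -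
        (x (t+1) - (a' - η • ((-2:ℝ) • v2))) := by abel
    rw [e1]; exact norm_sub_le _ _
  have tri3 : ‖proj Ωstar a' - (a' - η • ((-2:ℝ) • v2))‖ ≤
      ‖proj Ωstar a' - a'‖ + ‖a' - (a' - η • ((-2:ℝ) • v2))‖ := by
    have e1 : proj Ωstar a' - (a' - η • ((-2:ℝ) • v2)) =
        (proj Ωstar a' - a') + (a' - (a' - η • ((-2:ℝ) • v2))) := by abel
    rw [e1]; exact norm_add_le _ _
  have hpe : ‖proj Ωstar a' - a'‖ ≤ ‖h - a'‖ := proj_err Ωstar a' h hmemh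
  have hha' : ‖h - a'‖ ≤ Real.sqrt δ * ‖w‖ + ‖et‖ := by
    rw [norm_sub_rev]; exact nA
  have hwnorm : ‖w‖ = ‖h - x t‖ := norm_sub_rev _ _
  rw [← hwnorm]
  have hmul : 4*η*‖v2‖ ≤ 4*η*(Real.sqrt δ / 2 * ‖w‖ + ‖et‖) :=
    mul_le_mul_of_nonneg_left nC (by linarith)
  nlinarith [tri1, tri2, tri3, hb, hpe, hdiff, hha', hmul, hη0, norm_nonneg et,
    Real.sqrt_nonneg δ, norm_nonneg w, norm_nonneg v2]
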